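/- Let θ ∈ L²([0,2π]) satisfy ∫₀^{2π} cos(θ(s)) ds = 0 and ∫₀^{2π} sin(θ(s)) ds = 0. If there exists (a₁,a₂,a₃) ∈ ℝ³ with (a₁,a₂,a₃) ≠ (0,0,0) such that a₁ cos(θ(s)) + a₂ sin(θ(s)) + a₃ = 0 for almost every s ∈ [0,2π], then θ ∈ Z. Equivalently, for every θ in M \ Z, the three functions s ↦ 1, s ↦ cos(θ(s)), s ↦ sin(θ(s)) are linearly independent in L²([0,2π]) (these are the gradients of the constraints defining M, so M \ Z is a smooth submanifold of codimension 3 of L²). -/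

import Mathlib

open MeasureTheory Set Filter
open scoped Topology ENNReal

noncomputable section

/-- The measure `ds` on `[0, 2π]`. -/
def μArc : Measure ℝ := volume.restrict (Set.Icc 0 (2 * Real.pi))

theorem stmt5 (θ : ℝ → ℝ)
    (hθ : MemLp θ 2 μArc)
    (hcos : (∫ s, Real.cos (θ s) ∂μArc) = 0)
    (hsin : (∫ s, Real.sin (θ s) ∂μArc) = 0)
    (a₁ a₂ a₃ : ℝ) (ha : ¬(a₁ = 0 ∧ a₂ = 0 ∧ a₃ = 0))
    (hrel : ∀ᵐ s ∂μArc, a₁ * Real.cos (θ s) + a₂ * Real.sin (θ s) + a₃ = 0) :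
    -- then `θ ∈ Z`:
    ∃ b : ℝ, ∃ k : ℝ → ℤ, Measurable k ∧
      (∀ᵐ s ∂μArc, θ s = b + (k s : ℝ) * Real.pi) ∧
      volume {s ∈ Set.Icc 0 (2 * Real.pi) | Even (k s)} = ENNReal.ofReal Real.pi ∧
      volume {s ∈ Set.Icc 0 (2 * Real.pi) | Odd (k s)} = ENNReal.ofReal Real.pi := by
  have hπ := Real.pi_pos
  have hμuniv : μArc Set.univ = ENNReal.ofReal (2 * Real.pi) := by
    simp [μArc, Real.volume_Icc]
  haveI : IsFiniteMeasure μArc := ⟨by rw [hμuniv]; exact ENNReal.ofReal_lt_top⟩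
  have htoReal : (μArc Set.univ).toReal = 2 * Real.pi := by
    rw [hμuniv, ENNReal.toReal_ofReal (by positivity)]
  have hμne : μArc Set.univ ≠ 0 := by
    rw [hμuniv]
    exact (ENNReal.ofReal_pos.2 (by positivity)).ne'
  by_cases h12 : a₁ = 0 ∧ a₂ = 0
  · exfalso
    obtain ⟨h1, h2⟩ := h12
    have h3 : a₃ ≠ 0 := fun h => ha ⟨h1, h2, h⟩
    have hfalse : ∀ᵐ s ∂μArc, False := by
      filter_upwards [hrel] with s hs
      rw [h1, h2] at hs
      simp at hs
      exact h3 hs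
    rw [ae_iff] at hfalse
    simp only [not_false_iff, Set.setOf_true] at hfalse
    exact hμne hfalse
  -- main case
  set z : ℂ := (a₁ : ℂ) + (a₂ : ℂ) * Complex.I with hzdef
  have hzre : z.re = a₁ := by simp [hzdef]
  have hzim : z.im = a₂ := by simp [hzdef]
  have hz : z ≠ 0 := by
    intro h
    apply h12
    constructor
    · rw [← hzre, h]; simp
    · rw [← hzim, h]; simp
  set r := ‖z‖ with hrdef
  set φ := Complex.arg z with hφdef
  have hr : 0 < r := norm_pos_iff.mpr hz
  have ha1 : a₁ = r * Real.cos φ := by rw [← hzre, ← Complex.norm_mul_cos_arg]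
  have ha2 : a₂ = r * Real.sin φ := by rw [← hzim, ← Complex.norm_mul_sin_arg]
  have hkey : ∀ x, a₁ * Real.cos x + a₂ * Real.sin x = r * Real.cos (x - φ) := by
    intro x; rw [Real.cos_sub, ha1, ha2]; ring
  have hintcos : Integrable (fun s => Real.cos (θ s)) μArc :=
    (integrable_const 1).mono' (Real.continuous_cos.comp_aestronglyMeasurable hθ.1)
      (ae_of_all _ fun s => by simpa using Real.abs_cos_le_one _)
  have hintsin : Integrable (fun s => Real.sin (θ s)) μArc :=
    (integrable_const 1).mono' (Real.continuous_sin.comp_aestronglyMeasurable hθ.1)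
      (ae_of_all _ fun s => by simpa using Real.abs_sin_le_one _)
  have hI1 : ∫ s, Real.cos (θ s - φ) ∂μArc = 0 := by
    have heq : ∀ s, Real.cos (θ s - φ)
        = Real.cos φ * Real.cos (θ s) + Real.sin φ * Real.sin (θ s) := fun s => by
      rw [Real.cos_sub]; ring
    simp_rw [heq]
    rw [integral_add (hintcos.const_mul _) (hintsin.const_mul _),
      integral_const_mul, integral_const_mul, hcos, hsin]
    ring
  have hc : ∀ᵐ s ∂μArc, Real.cos (θ s - φ) = -a₃ / r := by
    filter_upwards [hrel] with s hs
    have h1 := hkey (θ s)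
    rw [eq_div_iff hr.ne']
    rw [h1] at hs
    linarith
  have hI2 : ∫ s, Real.cos (θ s - φ) ∂μArc = (2 * Real.pi) * (-a₃ / r) := by
    rw [integral_congr_ae hc, integral_const, measureReal_def, htoReal, smul_eq_mul]
  have hc0 : -a₃ / r = 0 := by
    have := hI2.symm.trans hI1
    have h2π : (2 : ℝ) * Real.pi ≠ 0 := by positivity
    exact (mul_eq_zero.1 this).resolve_left h2π
  have hzero : ∀ᵐ s ∂μArc, Real.cos (θ s - φ) = 0 := by
    filter_upwards [hc] with s hs
    rw [hs, hc0]
  -- measurable representative and k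
  have ham : AEMeasurable θ μArc := hθ.1.aemeasurable
  set θ' := ham.mk θ with hθ'def
  have hθ'meas : Measurable θ' := ham.measurable_mk
  have hθ'eq : θ =ᵐ[μArc] θ' := ham.ae_eq_mk
  set b := φ + Real.pi / 2 with hbdef
  set k : ℝ → ℤ := fun s => ⌊(θ' s - b) / Real.pi + 1 / 2⌋ with hkdef
  have hk : Measurable k :=
    (((hθ'meas.sub measurable_const).div_const _).add_const _).floor
  have hae : ∀ᵐ s ∂μArc, θ s = b + (k s : ℝ) * Real.pi := by
    filter_upwards [hzero, hθ'eq] with s h0 hsm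
    obtain ⟨n, hn⟩ := Real.cos_eq_zero_iff.1 h0
    have hθs : θ s = b + (n : ℝ) * Real.pi := by
      rw [hbdef]
      have : θ s - φ = (2 * (n : ℝ) + 1) * Real.pi / 2 := hn
      linarith
    have hks : k s = n := by
      have hval : (θ' s - b) / Real.pi + 1 / 2 = (n : ℝ) + 1 / 2 := by
        rw [← hsm, hθs]
        field_simp
        ring
      rw [hkdef]
      simp only [hval]
      rw [Int.floor_intCast_add]
      norm_num
    rw [hθs, hks]
  -- the sine integral
  have hI3 : ∫ s, Real.sin (θ s - φ) ∂μArc = 0 := by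
    have heq : ∀ s, Real.sin (θ s - φ)
        = Real.cos φ * Real.sin (θ s) - Real.sin φ * Real.cos (θ s) := fun s => by
      rw [Real.sin_sub]; ring
    simp_rw [heq]
    rw [integral_sub (hintsin.const_mul _) (hintcos.const_mul _),
      integral_const_mul, integral_const_mul, hcos, hsin]
    ring
  have hsgn : ∀ᵐ s ∂μArc, Real.sin (θ s - φ) = (-1 : ℝ) ^ (k s) := by
    filter_upwards [hae] with s hs
    have hx : θ s - φ = Real.pi / 2 + (k s : ℝ) * Real.pi := by
      rw [hs, hbdef]; ring
    rw [hx, Real.sin_add_int_mul_pi, Real.sin_pi_div_two, mul_one]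
  set A : Set ℝ := {s | Even (k s)} with hAdef
  have hA : MeasurableSet A := hk ((Set.to_countable {n : ℤ | Even n}).measurableSet)
  have hiA : ∫ s, ((-1 : ℝ) ^ (k s)) ∂μArc = (μArc A).toReal - (μArc Aᶜ).toReal := by
    have heq : (fun s => ((-1 : ℝ) ^ (k s)))
        = fun s => (A.indicator (fun _ => (1 : ℝ)) s - Aᶜ.indicator (fun _ => (1 : ℝ)) s) := by
      funext s
      by_cases h : Even (k s)
      · simp [hAdef, Set.indicator, h, h.neg_one_zpow]
      · simp [hAdef, Set.indicator, h, (Int.not_even_iff_odd.1 h).neg_one_zpow]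
    rw [heq, integral_sub ((integrable_const (1 : ℝ)).indicator hA)
        ((integrable_const (1 : ℝ)).indicator hA.compl),
      integral_indicator hA, integral_indicator hA.compl,
      setIntegral_const, setIntegral_const]
    simp
    rfl
  have hdiff : (μArc A).toReal - (μArc Aᶜ).toReal = 0 := by
    rw [← hiA, ← integral_congr_ae hsgn, hI3]
  have hsum : (μArc A).toReal + (μArc Aᶜ).toReal = 2 * Real.pi := by
    rw [← ENNReal.toReal_add (measure_ne_top _ _) (measure_ne_top _ _),
      measure_add_measure_compl hA, htoReal]
  have hxA : (μArc A).toReal = Real.pi := by linarith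
  have hxAc : (μArc Aᶜ).toReal = Real.pi := by linarith
  refine ⟨b, k, hk, hae, ?_, ?_⟩
  · have e1 : {s ∈ Set.Icc 0 (2 * Real.pi) | Even (k s)}
        = A ∩ Set.Icc 0 (2 * Real.pi) := by
      ext s; simp [hAdef, and_comm]
    rw [e1, ← Measure.restrict_apply hA]
    rw [show volume.restrict (Set.Icc 0 (2 * Real.pi)) = μArc from rfl]
    rw [← hxA, ENNReal.ofReal_toReal (measure_ne_top _ _)]
  · have e2 : {s ∈ Set.Icc 0 (2 * Real.pi) | Odd (k s)}
        = Aᶜ ∩ Set.Icc 0 (2 * Real.pi) := by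
      ext s
      simp [hAdef, and_comm, Int.not_even_iff_odd]
    rw [e2, ← Measure.restrict_apply hA.compl]
    rw [show volume.restrict (Set.Icc 0 (2 * Real.pi)) = μArc from rfl]
    rw [← hxAc, ENNReal.ofReal_toReal (measure_ne_top _ _)]
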